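/- Let X be a set of contexts, A a nonempty finite set of actions, and r : X × A → ℝ a reward function with |r(x, a)| ≤ B for all x ∈ X, a ∈ A. Let ρ = Φ be the standard normal cumulative distribution function, and define the contextual Borda function f_r(x, a) = (1/|A|) ∑_{a' ∈ A} Φ(r(x, a) − r(x, a')). Then for every x ∈ X and a ∈ A, ((1/√(2π)) e^{−2B²})·(r*(x) − r(x, a)) ≤ f_r*(x) − f_r(x, a); that is, Assumption 2 of the paper holds for the Gaussian CDF (Thurstone) link function with constant L₁ = √(2π) e^{2B²}. -/

import Mathlib

open MeasureTheory

lemma gauss_integrable :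
    Integrable (fun s : ℝ => (1 / Real.sqrt (2 * Real.pi)) * Real.exp (-s ^ 2 / 2)) := by
  have h : Integrable (fun s : ℝ => Real.exp (-(1/2 : ℝ) * s ^ 2)) :=
    integrable_exp_neg_mul_sq (by norm_num)
  have h2 := h.const_mul (1 / Real.sqrt (2 * Real.pi))
  have : (fun s : ℝ => (1 / Real.sqrt (2 * Real.pi)) * Real.exp (-s ^ 2 / 2))
      = fun s : ℝ => (1 / Real.sqrt (2 * Real.pi)) * Real.exp (-(1/2 : ℝ) * s ^ 2) := by
    funext s; congr 1; ring_nf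
  rw [this]; exact h2

lemma gauss_cdf_diff_ge (B u v : ℝ) (huv : v ≤ u) (hu : |u| ≤ 2 * B) (hv : |v| ≤ 2 * B) :
    (1 / Real.sqrt (2 * Real.pi)) * Real.exp (-(2 * B ^ 2)) * (u - v)
      ≤ (∫ s in Set.Iic u, (1 / Real.sqrt (2 * Real.pi)) * Real.exp (-s ^ 2 / 2))
        - ∫ s in Set.Iic v, (1 / Real.sqrt (2 * Real.pi)) * Real.exp (-s ^ 2 / 2) := by
  set c := (1 / Real.sqrt (2 * Real.pi)) * Real.exp (-(2 * B ^ 2)) with hc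
  have hint := gauss_integrable
  rw [intervalIntegral.integral_Iic_sub_Iic hint.integrableOn hint.integrableOn,
    intervalIntegral.integral_of_le huv]
  have hmono : ∀ s ∈ Set.Ioc v u, c ≤ (1 / Real.sqrt (2 * Real.pi)) * Real.exp (-s ^ 2 / 2) := by
    intro s hs
    have hsu : s ≤ 2 * B := hs.2.trans (le_of_abs_le hu)
    have hsv : -(2 * B) ≤ s := (neg_le_of_abs_le hv).trans hs.1.le
    have hsq : s ^ 2 ≤ (2 * B) ^ 2 := sq_le_sq' hsv hsu
    have : -(2 * B ^ 2) ≤ -s ^ 2 / 2 := by nlinarith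
    have := Real.exp_le_exp.mpr this
    have hpos : (0 : ℝ) ≤ 1 / Real.sqrt (2 * Real.pi) := by positivity
    exact mul_le_mul_of_nonneg_left this hpos
  calc c * (u - v) = ∫ _ in Set.Ioc v u, c := by
        rw [setIntegral_const, Real.volume_real_Ioc_of_le huv,
          smul_eq_mul, mul_comm]
    _ ≤ ∫ s in Set.Ioc v u, (1 / Real.sqrt (2 * Real.pi)) * Real.exp (-s ^ 2 / 2) :=
        setIntegral_mono_on (integrableOn_const (by simp [Real.volume_Ioc]))
          hint.integrableOn measurableSet_Ioc hmono

/-- For a reward bounded by `B` and the Gaussian-CDF (Thurstone) link,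
the contextual Borda function satisfies Assumption 2 with `L₁ = √(2π) e^{2B²}`, i.e.
`((1/√(2π)) e^{-2B²}) (r*(x) - r(x,a)) ≤ f_r*(x) - f_r(x,a)`. -/
theorem borda_assumption_two_gaussian_cdf
    {X A : Type*} [Fintype A] [Nonempty A]
    (r : X → A → ℝ) (B : ℝ) (hB : ∀ x a, |r x a| ≤ B)
    (f : X → A → ℝ)
    (hf : ∀ x a, f x a = (1 / (Fintype.card A : ℝ)) *
      ∑ a' : A, ∫ s in Set.Iic (r x a - r x a'),
        (1 / Real.sqrt (2 * Real.pi)) * Real.exp (-s ^ 2 / 2)) :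
    ∀ x a, ((1 / Real.sqrt (2 * Real.pi)) * Real.exp (-(2 * B ^ 2))) *
        (Finset.univ.sup' Finset.univ_nonempty (r x) - r x a)
      ≤ Finset.univ.sup' Finset.univ_nonempty (f x) - f x a := by
  intro x a
  set c := (1 / Real.sqrt (2 * Real.pi)) * Real.exp (-(2 * B ^ 2)) with hc
  obtain ⟨a0, -, ha0⟩ := Finset.exists_mem_eq_sup' Finset.univ_nonempty (r x)
  have hfa0 : f x a0 ≤ Finset.univ.sup' Finset.univ_nonempty (f x) :=
    Finset.le_sup' _ (Finset.mem_univ a0)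
  have hra : r x a ≤ r x a0 := ha0 ▸ Finset.le_sup' _ (Finset.mem_univ a)
  have key : c * (r x a0 - r x a) ≤ f x a0 - f x a := by
    rw [hf x a0, hf x a, ← mul_sub, ← Finset.sum_sub_distrib]
    have hterm : ∀ a' : A, c * (r x a0 - r x a) ≤
        (∫ s in Set.Iic (r x a0 - r x a'),
          (1 / Real.sqrt (2 * Real.pi)) * Real.exp (-s ^ 2 / 2))
        - ∫ s in Set.Iic (r x a - r x a'),
          (1 / Real.sqrt (2 * Real.pi)) * Real.exp (-s ^ 2 / 2) := by
      intro a'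
      have h1 := hB x a0; have h2 := hB x a; have h3 := hB x a'
      have := gauss_cdf_diff_ge B (r x a0 - r x a') (r x a - r x a')
        (by linarith) (by rw [abs_le] at *; constructor <;> linarith)
        (by rw [abs_le] at *; constructor <;> linarith)
      have heq : c * (r x a0 - r x a)
          = (1 / Real.sqrt (2 * Real.pi)) * Real.exp (-(2 * B ^ 2))
            * (r x a0 - r x a' - (r x a - r x a')) := by rw [hc]; ring
      rw [heq]; exact this
    have hsum : (Fintype.card A : ℝ) * (c * (r x a0 - r x a)) ≤
        ∑ a' : A, ((∫ s in Set.Iic (r x a0 - r x a'),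
          (1 / Real.sqrt (2 * Real.pi)) * Real.exp (-s ^ 2 / 2))
        - ∫ s in Set.Iic (r x a - r x a'),
          (1 / Real.sqrt (2 * Real.pi)) * Real.exp (-s ^ 2 / 2)) := by
      calc (Fintype.card A : ℝ) * (c * (r x a0 - r x a))
          = ∑ _ : A, c * (r x a0 - r x a) := by
            rw [Finset.sum_const, Finset.card_univ, nsmul_eq_mul]
        _ ≤ _ := Finset.sum_le_sum fun a' _ => hterm a'
    have hcard : (0 : ℝ) < (Fintype.card A : ℝ) := by
      exact_mod_cast Fintype.card_pos
    calc c * (r x a0 - r x a)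
        = (1 / (Fintype.card A : ℝ)) * ((Fintype.card A : ℝ) * (c * (r x a0 - r x a))) := by
          field_simp
      _ ≤ _ := mul_le_mul_of_nonneg_left hsum (by positivity)
  rw [ha0]
  linarith [key, hfa0]
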